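/- Let G be a finite simple graph with vertex cover S, let S' ⊆ V(G)∖S, and let D be the set of vertices w ∈ V(G)∖(S ∪ S') of degree at most 2. Suppose that for every w ∈ D there exist at least three distinct vertices in S' whose open neighborhood in G is exactly N(w). Then G admits a 2-CNCF-coloring if and only if the induced subgraph G − D (obtained by deleting all vertices of D) admits a 2-CNCF-coloring. -/

import Mathlib

inductive Color where
  | red
  | blue
deriving DecidableEq

/-- A coloring `c` of the vertices of `G` is a closed-neighborhood conflict-free
coloring if every closed neighborhood `N[v] = {v} ∪ N(v)` contains a vertex whose
color is unique in `N[v]`. -/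
def IsCNCF {V C : Type*} (G : SimpleGraph V) (c : V → C) : Prop :=
  ∀ v : V, ∃ u ∈ insert v (G.neighborSet v),
    ∀ w ∈ insert v (G.neighborSet v), w ≠ u → c w ≠ c u

lemma color_eq_of_ne_of_ne {x y z : Color} (h1 : x ≠ z) (h2 : y ≠ z) : x = y := by
  cases x <;> cases y <;> cases z <;> simp_all

lemma neighbors_sub_pair {V : Type*} [Fintype V] [DecidableEq V]
    (G : SimpleGraph V) [DecidableRel G.Adj] {w y z : V}
    (hdeg : G.degree w ≤ 2) (hy : y ∈ G.neighborSet w) (hz : z ∈ G.neighborSet w)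
    (hyz : y ≠ z) : ∀ x ∈ G.neighborSet w, x = y ∨ x = z := by
  intro x hx
  by_contra hcon
  push_neg at hcon
  have h3 : ({y, z, x} : Finset V) ⊆ G.neighborFinset w := by
    intro t ht
    simp only [Finset.mem_insert, Finset.mem_singleton] at ht
    rcases ht with rfl | rfl | rfl
    · exact (G.mem_neighborFinset w t).2 ((G.mem_neighborSet w t).1 hy)
    · exact (G.mem_neighborFinset w t).2 ((G.mem_neighborSet w t).1 hz)
    · exact (G.mem_neighborFinset w t).2 ((G.mem_neighborSet w t).1 hx)
  have hcard : ({y, z, x} : Finset V).card = 3 := by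
    rw [Finset.card_insert_of_notMem, Finset.card_insert_of_notMem,
      Finset.card_singleton]
    · simp only [Finset.mem_singleton]
      exact fun h => hcon.2 h.symm
    · simp only [Finset.mem_insert, Finset.mem_singleton]
      push_neg
      exact ⟨hyz, fun h => hcon.1 h.symm⟩
  have hle := Finset.card_le_card h3
  rw [hcard] at hle
  have : (G.neighborFinset w).card = G.degree w := rfl
  omega

/-- Let `S` be a vertex cover of `G`, `S' ⊆ V(G) ∖ S`, and let `D` be the set of
vertices outside `S ∪ S'` of degree at most 2. If for every `w ∈ D` there are at
least three distinct vertices of `S'` whose open neighborhood equals `N(w)`, then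
`G` is 2-CNCF-colorable if and only if `G − D` is 2-CNCF-colorable. -/
theorem two_CNCF_delete_low_degree {V : Type*} [Fintype V] [DecidableEq V]
    (G : SimpleGraph V) [DecidableRel G.Adj]
    (S S' : Set V)
    (hvc : ∀ ⦃a b : V⦄, G.Adj a b → a ∈ S ∨ b ∈ S)
    (hS' : S' ⊆ Sᶜ)
    (D : Set V) (hD : D = {w : V | w ∉ S ∧ w ∉ S' ∧ G.degree w ≤ 2})
    (hmark : ∀ w ∈ D, ∃ a ∈ S', ∃ b ∈ S', ∃ d ∈ S',
      a ≠ b ∧ a ≠ d ∧ b ≠ d ∧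
      G.neighborSet a = G.neighborSet w ∧
      G.neighborSet b = G.neighborSet w ∧
      G.neighborSet d = G.neighborSet w) :
    (∃ c : V → Color, IsCNCF G c) ↔
      (∃ c : (Dᶜ : Set V) → Color, IsCNCF (G.induce (Dᶜ : Set V)) c) := by
  have hDS : ∀ z ∈ D, z ∉ S := by intro z hz; rw [hD] at hz; exact hz.1
  have hDS' : ∀ z ∈ D, z ∉ S' := by intro z hz; rw [hD] at hz; exact hz.2.1
  have hDdeg : ∀ z ∈ D, G.degree z ≤ 2 := by intro z hz; rw [hD] at hz; exact hz.2.2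
  have hnbD : ∀ z ∈ D, ∀ y ∈ G.neighborSet z, y ∉ D := by
    intro z hz y hy hyD
    rcases hvc ((G.mem_neighborSet z y).1 hy) with h | h
    · exact hDS z hz h
    · exact hDS y hyD h
  have hS'D : ∀ z ∈ S', z ∈ (Dᶜ : Set V) := fun z hz hzD => hDS' z hzD hz
  constructor
  · -- forward direction: restrict the coloring
    rintro ⟨c, hc⟩
    refine ⟨fun v => c ↑v, ?_⟩
    intro v
    obtain ⟨u, hu, huniq⟩ := hc ↑v
    have hkey : u ∉ D := by
      intro huD
      have hvD : (↑v : V) ∉ D := v.2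
      have hneq : u ≠ ↑v := fun h => hvD (h ▸ huD)
      have hadj : G.Adj ↑v u := by
        rcases hu with h | h
        · exact absurd h hneq
        · exact h
      obtain ⟨a, haS', b, hbS', d, hdS', hab, had, hbd, hNa, hNb, hNd⟩ := hmark u huD
      have hva : G.Adj ↑v a := by
        have : (↑v : V) ∈ G.neighborSet a := hNa ▸ (G.mem_neighborSet u ↑v).2 hadj.symm
        exact ((G.mem_neighborSet a ↑v).1 this).symm
      have hvb : G.Adj ↑v b := by
        have : (↑v : V) ∈ G.neighborSet b := hNb ▸ (G.mem_neighborSet u ↑v).2 hadj.symm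
        exact ((G.mem_neighborSet b ↑v).1 this).symm
      have hvd : G.Adj ↑v d := by
        have : (↑v : V) ∈ G.neighborSet d := hNd ▸ (G.mem_neighborSet u ↑v).2 hadj.symm
        exact ((G.mem_neighborSet d ↑v).1 this).symm
      have hau : a ≠ u := fun h => hDS' u huD (h ▸ haS')
      have hbu : b ≠ u := fun h => hDS' u huD (h ▸ hbS')
      have hdu : d ≠ u := fun h => hDS' u huD (h ▸ hdS')
      have hca : c a ≠ c u := huniq a (Set.mem_insert_iff.2 (Or.inr hva)) hau
      have hcb : c b ≠ c u := huniq b (Set.mem_insert_iff.2 (Or.inr hvb)) hbu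
      have hcd : c d ≠ c u := huniq d (Set.mem_insert_iff.2 (Or.inr hvd)) hdu
      have hcv : c ↑v ≠ c u := huniq ↑v (Set.mem_insert _ _) hneq.symm
      have hav : c a = c ↑v := color_eq_of_ne_of_ne hca hcv
      have hbv : c b = c ↑v := color_eq_of_ne_of_ne hcb hcv
      by_cases hx : ∃ x ∈ G.neighborSet u, x ≠ ↑v
      · obtain ⟨x, hxu, hxv⟩ := hx
        have hsub := neighbors_sub_pair G (hDdeg u huD)
          ((G.mem_neighborSet u ↑v).2 hadj.symm) hxu (fun h => hxv h.symm)
        have hxa : G.Adj a x := (G.mem_neighborSet a x).1 (hNa ▸ hxu)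
        have hxb : G.Adj b x := (G.mem_neighborSet b x).1 (hNb ▸ hxu)
        obtain ⟨u₂, hu₂, huniq₂⟩ := hc a
        have hu₂cases : u₂ = a ∨ u₂ = ↑v ∨ u₂ = x := by
          rcases hu₂ with h | h
          · exact Or.inl h
          · exact Or.inr (hsub u₂ (hNa ▸ h))
        have hvmema : (↑v : V) ∈ insert a (G.neighborSet a) :=
          Set.mem_insert_iff.2 (Or.inr ((G.mem_neighborSet a ↑v).2 hva.symm))
        have hamema : a ∈ insert a (G.neighborSet a) := Set.mem_insert _ _
        have hcx : c x = c u := by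
          rcases hu₂cases with h | h | h
          · have hne : (↑v : V) ≠ u₂ := fun hh => hva.ne (hh.trans h)
            have := huniq₂ ↑v hvmema hne
            rw [h] at this
            exact absurd hav.symm this
          · have hne : a ≠ u₂ := fun hh => hva.ne' (hh.trans h)
            have := huniq₂ a hamema hne
            rw [h] at this
            exact absurd hav this
          · have hne : a ≠ u₂ := fun hh => hxa.ne (hh.trans h)
            have hax : c a ≠ c x := by rw [← h]; exact huniq₂ a hamema hne
            have hxv' : c x ≠ c ↑v := by rw [← hav]; exact fun hh => hax hh.symm
            exact color_eq_of_ne_of_ne hxv' (fun hh => hcv hh.symm)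
        obtain ⟨u₃, hu₃, huniq₃⟩ := hc x
        have hxmem : x ∈ insert x (G.neighborSet x) := Set.mem_insert _ _
        have humem : u ∈ insert x (G.neighborSet x) :=
          Set.mem_insert_iff.2 (Or.inr ((G.mem_neighborSet x u).2
            ((G.mem_neighborSet u x).1 hxu).symm))
        have hamem : a ∈ insert x (G.neighborSet x) :=
          Set.mem_insert_iff.2 (Or.inr ((G.mem_neighborSet x a).2 hxa.symm))
        have hbmem : b ∈ insert x (G.neighborSet x) :=
          Set.mem_insert_iff.2 (Or.inr ((G.mem_neighborSet x b).2 hxb.symm))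
        by_cases hcu₃ : c u₃ = c u
        · by_cases h : u₃ = x
          · have hune : u ≠ u₃ := by
              rw [h]; exact ((G.mem_neighborSet u x).1 hxu).ne
            exact huniq₃ u humem hune hcu₃.symm
          · exact huniq₃ x hxmem (fun hh => h hh.symm) (hcx.trans hcu₃.symm)
        · have hcu₃v : c u₃ = c ↑v := color_eq_of_ne_of_ne hcu₃ hcv
          by_cases h : u₃ = a
          · exact huniq₃ b hbmem (fun hh => hab (hh.trans h).symm)
              (hbv.trans hcu₃v.symm)
          · exact huniq₃ a hamem (fun hh => h hh.symm) (hav.trans hcu₃v.symm)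
      · push_neg at hx
        obtain ⟨u₂, hu₂, huniq₂⟩ := hc a
        have hvmema : (↑v : V) ∈ insert a (G.neighborSet a) :=
          Set.mem_insert_iff.2 (Or.inr ((G.mem_neighborSet a ↑v).2 hva.symm))
        have hamema : a ∈ insert a (G.neighborSet a) := Set.mem_insert _ _
        have hu₂cases : u₂ = a ∨ u₂ = ↑v := by
          rcases hu₂ with h | h
          · exact Or.inl h
          · exact Or.inr (hx u₂ (hNa ▸ h))
        rcases hu₂cases with h | h
        · have hne : (↑v : V) ≠ u₂ := fun hh => hva.ne (hh.trans h)
          have := huniq₂ ↑v hvmema hne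
          rw [h] at this
          exact this hav.symm
        · have hne : a ≠ u₂ := fun hh => hva.ne' (hh.trans h)
          have := huniq₂ a hamema hne
          rw [h] at this
          exact this hav
    have humem' : (⟨u, hkey⟩ : (Dᶜ : Set V)) ∈
        insert v ((G.induce (Dᶜ : Set V)).neighborSet v) := by
      rcases hu with h | h
      · exact Set.mem_insert_iff.2 (Or.inl (Subtype.ext h.symm).symm)
      · exact Set.mem_insert_iff.2 (Or.inr h)
    refine ⟨⟨u, hkey⟩, humem', ?_⟩
    intro w hw hwne
    have hwmem : (↑w : V) ∈ insert (↑v : V) (G.neighborSet ↑v) := by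
      rcases hw with h | h
      · exact Set.mem_insert_iff.2 (Or.inl (congrArg Subtype.val h))
      · exact Set.mem_insert_iff.2 (Or.inr h)
    exact huniq ↑w hwmem (fun h => hwne (Subtype.ext h))
  · -- backward direction: extend the coloring
    rintro ⟨c', hc'⟩
    classical
    choose u' hu'mem hu'uniq using hc'
    have htwin : ∀ w (hw : w ∈ D), ∃ t : (Dᶜ : Set V),
        G.neighborSet ↑t = G.neighborSet w ∧
        ∀ v : (Dᶜ : Set V), (↑v : V) ∈ G.neighborSet w → t ≠ u' v := by
      intro w hw
      obtain ⟨a, haS', b, hbS', d, hdS', hab, had, hbd, hNa, hNb, hNd⟩ := hmark w hw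
      have haD : a ∈ (Dᶜ : Set V) := hS'D a haS'
      have hbD : b ∈ (Dᶜ : Set V) := hS'D b hbS'
      have hdD : d ∈ (Dᶜ : Set V) := hS'D d hdS'
      set A : (Dᶜ : Set V) := ⟨a, haD⟩ with hA
      set B : (Dᶜ : Set V) := ⟨b, hbD⟩ with hB
      set C : (Dᶜ : Set V) := ⟨d, hdD⟩ with hC
      have hAB : A ≠ B := fun h => hab (congrArg Subtype.val h)
      have hAC : A ≠ C := fun h => had (congrArg Subtype.val h)
      have hBC : B ≠ C := fun h => hbd (congrArg Subtype.val h)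
      by_cases hne : ∃ y, y ∈ G.neighborSet w
      · obtain ⟨y, hy⟩ := hne
        have hyD : y ∈ (Dᶜ : Set V) := hnbD w hw y hy
        by_cases hz : ∃ z ∈ G.neighborSet w, z ≠ y
        · obtain ⟨z, hzmem, hzy⟩ := hz
          have hzD : z ∈ (Dᶜ : Set V) := hnbD w hw z hzmem
          have hsub := neighbors_sub_pair G (hDdeg w hw) hy hzmem (fun h => hzy h.symm)
          set p := u' ⟨y, hyD⟩ with hp
          set q := u' ⟨z, hzD⟩ with hq
          have hex : ∃ t : (Dᶜ : Set V), (t = A ∨ t = B ∨ t = C) ∧ t ≠ p ∧ t ≠ q := by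
            by_cases h1 : A ≠ p ∧ A ≠ q
            · exact ⟨A, Or.inl rfl, h1⟩
            · by_cases h2 : B ≠ p ∧ B ≠ q
              · exact ⟨B, Or.inr (Or.inl rfl), h2⟩
              · by_cases h3 : C ≠ p ∧ C ≠ q
                · exact ⟨C, Or.inr (Or.inr rfl), h3⟩
                · exfalso
                  have h1 : A = p ∨ A = q := by
                    by_contra hc; push_neg at hc; exact h1 hc
                  have h2 : B = p ∨ B = q := by
                    by_contra hc; push_neg at hc; exact h2 hc
                  have h3 : C = p ∨ C = q := by
                    by_contra hc; push_neg at hc; exact h3 hc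
                  rcases h1 with h1 | h1 <;> rcases h2 with h2 | h2 <;>
                    rcases h3 with h3 | h3 <;>
                    first
                      | exact hAB (h1.trans h2.symm)
                      | exact hAC (h1.trans h3.symm)
                      | exact hBC (h2.trans h3.symm)
          obtain ⟨t, htmem, htp, htq⟩ := hex
          refine ⟨t, ?_, ?_⟩
          · rcases htmem with rfl | rfl | rfl
            · exact hNa
            · exact hNb
            · exact hNd
          · intro v hv
            rcases hsub ↑v hv with h | h
            · have : v = ⟨y, hyD⟩ := Subtype.ext h
              rw [this]; exact htp
            · have : v = ⟨z, hzD⟩ := Subtype.ext h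
              rw [this]; exact htq
        · push_neg at hz
          set p := u' ⟨y, hyD⟩ with hp
          by_cases h1 : A ≠ p
          · refine ⟨A, hNa, ?_⟩
            intro v hv
            have : v = ⟨y, hyD⟩ := Subtype.ext (hz ↑v hv)
            rw [this]; exact h1
          · push_neg at h1
            refine ⟨B, hNb, ?_⟩
            intro v hv
            have : v = ⟨y, hyD⟩ := Subtype.ext (hz ↑v hv)
            rw [this]
            exact fun h => hAB (h1.trans h.symm)
      · push_neg at hne
        exact ⟨A, hNa, fun v hv => absurd hv (hne ↑v)⟩
    choose t ht1 ht2 using htwin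
    refine ⟨fun x => if h : x ∈ D then c' (t x h) else c' ⟨x, h⟩, ?_⟩
    intro v
    by_cases hv : v ∈ D
    · have hNtv : G.neighborSet ↑(t v hv) = G.neighborSet v := ht1 v hv
      set tv := t v hv with htvdef
      have hmem0 := hu'mem tv
      have huniq0 := hu'uniq tv
      have htvnotin : (↑tv : V) ∉ G.neighborSet v := by
        intro hmem
        have : v ∈ G.neighborSet ↑tv :=
          (G.mem_neighborSet _ _).2 ((G.mem_neighborSet _ _).1 hmem).symm
        rw [hNtv] at this
        exact G.loopless.irrefl v ((G.mem_neighborSet v v).1 this)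
      have hcv : (if h : v ∈ D then c' (t v h) else c' ⟨v, h⟩) = c' tv := dif_pos hv
      by_cases hcase : u' tv = tv
      · refine ⟨v, Set.mem_insert _ _, ?_⟩
        intro z hz hzv
        have hzN : z ∈ G.neighborSet v := by
          rcases hz with h | h
          · exact absurd h hzv
          · exact h
        have hzD : z ∉ D := hnbD v hv z hzN
        have hcz : (if h : z ∈ D then c' (t z h) else c' ⟨z, h⟩) = c' ⟨z, hzD⟩ :=
          dif_neg hzD
        have hadj : (G.induce (Dᶜ : Set V)).Adj tv ⟨z, hzD⟩ :=
          (G.mem_neighborSet _ _).1 (hNtv ▸ hzN)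
        have hne : (⟨z, hzD⟩ : (Dᶜ : Set V)) ≠ u' tv := by
          rw [hcase]
          intro h
          exact htvnotin ((congrArg Subtype.val h) ▸ hzN)
        have := huniq0 ⟨z, hzD⟩ (Set.mem_insert_iff.2 (Or.inr hadj)) hne
        rw [hcase] at this
        beta_reduce
        rw [hcz, hcv]
        exact this
      · have hu0adj : G.Adj ↑tv ↑(u' tv) := by
          rcases hmem0 with h | h
          · exact absurd h hcase
          · exact h
        have hu0N : (↑(u' tv) : V) ∈ G.neighborSet v :=
          hNtv ▸ ((G.mem_neighborSet _ _).2 hu0adj)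
        have hcu0 : (if h : (↑(u' tv) : V) ∈ D then c' (t _ h) else c' ⟨_, h⟩)
            = c' (u' tv) := dif_neg (u' tv).2
        refine ⟨↑(u' tv), Set.mem_insert_iff.2 (Or.inr hu0N), ?_⟩
        intro z hz hzne
        beta_reduce
        rw [hcu0]
        rcases hz with h | h
        · subst h
          rw [hcv]
          exact huniq0 tv (Set.mem_insert _ _) (fun hh => hcase hh.symm)
        · have hzD : z ∉ D := hnbD v hv z h
          have hcz : (if h : z ∈ D then c' (t z h) else c' ⟨z, h⟩) = c' ⟨z, hzD⟩ :=
            dif_neg hzD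
          rw [hcz]
          have hadj : (G.induce (Dᶜ : Set V)).Adj tv ⟨z, hzD⟩ :=
            (G.mem_neighborSet _ _).1 (hNtv ▸ h)
          exact huniq0 ⟨z, hzD⟩ (Set.mem_insert_iff.2 (Or.inr hadj))
            (fun hh => hzne (congrArg Subtype.val hh))
    · set v' : (Dᶜ : Set V) := ⟨v, hv⟩ with hv'def
      have hmem0 := hu'mem v'
      have huniq0 := hu'uniq v'
      have hcu0 : (if h : (↑(u' v') : V) ∈ D then c' (t _ h) else c' ⟨_, h⟩)
          = c' (u' v') := dif_neg (u' v').2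
      have hmemv : (↑(u' v') : V) ∈ insert v (G.neighborSet v) := by
        rcases hmem0 with h | h
        · exact Set.mem_insert_iff.2 (Or.inl (congrArg Subtype.val h))
        · exact Set.mem_insert_iff.2 (Or.inr h)
      refine ⟨↑(u' v'), hmemv, ?_⟩
      intro z hz hzne
      beta_reduce
      rw [hcu0]
      by_cases hzD : z ∈ D
      · have hzv : z ≠ v := fun h => hv (h ▸ hzD)
        have hzN : z ∈ G.neighborSet v := by
          rcases hz with h | h
          · exact absurd h hzv
          · exact h
        have hvNz : v ∈ G.neighborSet z :=
          (G.mem_neighborSet _ _).2 ((G.mem_neighborSet _ _).1 hzN).symm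
        have hban : t z hzD ≠ u' v' := ht2 z hzD v' hvNz
        have hadjv : G.Adj v ↑(t z hzD) := by
          have : v ∈ G.neighborSet ↑(t z hzD) := (ht1 z hzD).symm ▸ hvNz
          exact ((G.mem_neighborSet _ _).1 this).symm
        have hadj : (G.induce (Dᶜ : Set V)).Adj v' (t z hzD) := hadjv
        have hcz : (if h : z ∈ D then c' (t z h) else c' ⟨z, h⟩) = c' (t z hzD) :=
          dif_pos hzD
        rw [hcz]
        exact huniq0 (t z hzD) (Set.mem_insert_iff.2 (Or.inr hadj)) hban
      · have hcz : (if h : z ∈ D then c' (t z h) else c' ⟨z, h⟩) = c' ⟨z, hzD⟩ :=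
          dif_neg hzD
        rw [hcz]
        have hzmem' : (⟨z, hzD⟩ : (Dᶜ : Set V)) ∈
            insert v' ((G.induce (Dᶜ : Set V)).neighborSet v') := by
          rcases hz with h | h
          · exact Set.mem_insert_iff.2 (Or.inl (Subtype.ext h))
          · exact Set.mem_insert_iff.2 (Or.inr h)
        exact huniq0 ⟨z, hzD⟩ hzmem' (fun hh => hzne (congrArg Subtype.val hh))
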